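/- Let T = x(T1,T2) be a binary tree with left subtree T1 and right subtree T2. Then the set of interval-posets {IP[T',T] : T' a binary tree with T' ≤ T in the Tamari order} is equal to the union, over all binary trees T1' ≤ T1 and T2' ≤ T2, of the compositions 𝔹(IP[T1',T1], IP[T2',T2]). -/

import Mathlib

open Polynomial

/-- A binary tree: either the empty tree or a pair of binary trees
(left and right subtrees) grafted on an internal node. -/
inductive BinTree : Type
  | leaf : BinTree
  | node : BinTree → BinTree → BinTree

namespace BinTree

/-- The size of a binary tree: its number of internal nodes. -/
def size : BinTree → ℕ
  | leaf => 0
  | node l r => l.size + r.size + 1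

/-- One right rotation somewhere in the tree: `Rot T T'` means that `T'` is obtained
from `T` by replacing one subtree of the form `y(x(A,B),C)` by `x(A,y(B,C))`. -/
inductive Rot : BinTree → BinTree → Prop
  | root (A B C : BinTree) : Rot (node (node A B) C) (node A (node B C))
  | left {L L' : BinTree} (R : BinTree) : Rot L L' → Rot (node L R) (node L' R)
  | right (L : BinTree) {R R' : BinTree} : Rot R R' → Rot (node L R) (node L R')

/-- The Tamari order: `TamariLE T T'` iff `T'` is obtained from `T` by a (possibly empty)
sequence of right rotations. -/
def TamariLE (T T' : BinTree) : Prop := Relation.ReflTransGen Rot T T'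

/-- The Tamari polynomial `B_T ∈ ℤ[x]`: `B_∅ = 1` and for `T = x(L,R)`, `B_T` is the
unique polynomial with `(x-1)·B_T = x·B_L·(x·B_R - B_R(1))` (exact division by the
monic polynomial `X - 1`, the right-hand side vanishing at `x = 1`). -/
noncomputable def tamPoly : BinTree → Polynomial ℤ
  | leaf => 1
  | node l r =>
      (X * tamPoly l * (X * tamPoly r - C ((tamPoly r).eval 1))) /ₘ (X - C 1)

/-- The mirror Tamari polynomial, obtained by exchanging the roles of the left and
right subtrees in the recursive definition of the Tamari polynomial. -/
noncomputable def tamPolyMirror : BinTree → Polynomial ℤ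
  | leaf => 1
  | node l r =>
      (X * tamPolyMirror r * (X * tamPolyMirror l - C ((tamPolyMirror l).eval 1))) /ₘ (X - C 1)

/-- The number of nodes on the left border of a binary tree. -/
def leftBorder : BinTree → ℕ
  | leaf => 0
  | node l _ => l.leftBorder + 1

/-- The number of nodes on the right border of a binary tree. -/
def rightBorder : BinTree → ℕ
  | leaf => 0
  | node _ r => r.rightBorder + 1

/-- `inSub T a b`: in the unique binary-search-tree labelling of `T` by `1,…,size T`
(all labels of the left subtree of a node are smaller than its label, all labels of its
right subtree are larger), the node labelled `a` belongs to the subtree rooted at the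
node labelled `b` (in particular `inSub T a a` holds for every node label `a`). -/
def inSub : BinTree → ℕ → ℕ → Prop
  | leaf => fun _ _ => False
  | node l r => fun a b =>
      (b = l.size + 1 ∧ 1 ≤ a ∧ a ≤ l.size + r.size + 1) ∨
      inSub l a b ∨
      (l.size + 1 < a ∧ l.size + 1 < b ∧ inSub r (a - (l.size + 1)) (b - (l.size + 1)))

/-- The binary search tree poset of `T`: `bstRel T a b` iff `a ≺_T b`, i.e. `a ≠ b` and
the node labelled `a` is in the subtree rooted at the node labelled `b`. -/
def bstRel (T : BinTree) (a b : ℕ) : Prop := a ≠ b ∧ inSub T a b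

/-- The increasing forest `inc(T)`: `a ≺ b` iff `a < b` and `a ≺_T b`. -/
def incRel (T : BinTree) (a b : ℕ) : Prop := a < b ∧ bstRel T a b

/-- The decreasing forest `dec(T)`: `b ≺ a` iff `b > a` and `b ≺_T a`. -/
def decRel (T : BinTree) (a b : ℕ) : Prop := b < a ∧ bstRel T a b

/-- The relations of the interval-poset `IP[T,T']`: exactly those of `dec(T)`
together with those of `inc(T')`. -/
def IPrel (T T' : BinTree) (a b : ℕ) : Prop := decRel T a b ∨ incRel T' a b

end BinTree

open BinTree

/-- `σ` is a linear extension of the strict relation `rel` on `{1,…,n}`: reading the word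
`σ(1)…σ(n)` (the `i`-th letter being the label `(σ i : ℕ) + 1`), whenever `rel a b` holds
the letter `a` appears before the letter `b`. -/
def IsLinExt (n : ℕ) (rel : ℕ → ℕ → Prop) (σ : Equiv.Perm (Fin n)) : Prop :=
  ∀ i j : Fin n, rel ((σ i : ℕ) + 1) ((σ j : ℕ) + 1) → i < j

/-- An interval-poset of size `n`: a (strict) poset on `{1,…,n}` such that
`a ≺ c` implies `b ≺ c` for all `a < b < c`, and `c ≺ a` implies `b ≺ a` for all
`a < b < c`. -/
def IsIntervalPoset (n : ℕ) (rel : ℕ → ℕ → Prop) : Prop :=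
  (∀ a b, rel a b → 1 ≤ a ∧ a ≤ n ∧ 1 ≤ b ∧ b ≤ n) ∧
  (∀ a, ¬ rel a a) ∧
  (∀ a b c, rel a b → rel b c → rel a c) ∧
  (∀ a b c, a < b → b < c → rel a c → rel b c) ∧
  (∀ a b c, a < b → b < c → rel c a → rel b a)

/-- `trees(P)` : the number of connected components of the forest formed by the decreasing
relations of `P`, i.e. the number of `k ∈ {1,…,n}` such that there is no `j < k`
with `k ≺_P j`. -/
noncomputable def treeStat (n : ℕ) (rel : ℕ → ℕ → Prop) : ℕ :=
  Set.ncard {k : ℕ | 1 ≤ k ∧ k ≤ n ∧ ∀ j, j < k → ¬ rel k j}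

/-- The composition `𝔹(I1,I2)` of two interval-posets of sizes `k1` and `k2`:
the set of interval-posets `I` of size `k1+k2+1` such that
(i) the relations of `I` among `1,…,k1` are exactly those of `I1`,
(ii) the relations of `I` among `k1+2,…,k1+k2+1` are exactly those of `I2` shifted
by `k1+1`, (iii) `i ≺_I k1+1` for all `i ≤ k1`, and (iv) there is no relation
`k1+1 ≺_I j` for `j > k1+1`. -/
def Comp (k1 k2 : ℕ) (I1 I2 : ℕ → ℕ → Prop) : Set (ℕ → ℕ → Prop) :=
  {I | IsIntervalPoset (k1 + k2 + 1) I ∧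
    (∀ a b, 1 ≤ a → a ≤ k1 → 1 ≤ b → b ≤ k1 → (I a b ↔ I1 a b)) ∧
    (∀ a b, k1 + 2 ≤ a → a ≤ k1 + k2 + 1 → k1 + 2 ≤ b → b ≤ k1 + k2 + 1 →
      (I a b ↔ I2 (a - (k1 + 1)) (b - (k1 + 1)))) ∧
    (∀ i, 1 ≤ i → i ≤ k1 → I i (k1 + 1)) ∧
    (∀ j, k1 + 1 < j → ¬ I (k1 + 1) j)}

/-- The co-inversions of a permutation `σ` of `{1,…,n}` (written as the word
`σ(1)…σ(n)`): pairs `(σ(i), σ(j))` with `i < j` and `σ(i) > σ(j)`. -/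
def coinv (n : ℕ) (σ : Equiv.Perm (Fin n)) : Set (Fin n × Fin n) :=
  {p | ∃ i j : Fin n, i < j ∧ σ j < σ i ∧ p = (σ i, σ j)}

namespace BinTree

/-- Size of the right subtree of the node labelled `b` in the BST labelling of `T`. -/
def rv : BinTree → ℕ → ℕ
  | leaf, _ => 0
  | node l r, b =>
      if b < l.size + 1 then rv l b
      else if b = l.size + 1 then r.size
      else rv r (b - (l.size + 1))

lemma rot_size {U V : BinTree} (h : Rot U V) : U.size = V.size := by
  induction h with
  | root A B C => simp [size]; omega
  | left R h ih => simp [size]; omega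
  | right L h ih => simp [size]; omega

lemma tamari_size {U V : BinTree} (h : TamariLE U V) : U.size = V.size := by
  induction h with
  | refl => rfl
  | tail _ h ih => rw [ih, rot_size h]

lemma inSub_bounds {T : BinTree} {a b : ℕ} (h : inSub T a b) :
    1 ≤ a ∧ a ≤ T.size ∧ 1 ≤ b ∧ b ≤ T.size := by
  induction T generalizing a b with
  | leaf => exact absurd h (by simp [inSub])
  | node l r ihl ihr =>
    simp only [inSub] at h
    rcases h with ⟨hb, h1, h2⟩ | h | ⟨h1, h2, h⟩
    · simp [size]; omega
    · have := ihl h; simp [size]; omega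
    · have := ihr h; simp [size]; omega

lemma inSub_trans {T : BinTree} {a b c : ℕ} (h1 : inSub T a b) (h2 : inSub T b c) :
    inSub T a c := by
  induction T generalizing a b c with
  | leaf => exact absurd h1 (by simp [inSub])
  | node l r ihl ihr =>
    simp only [inSub] at h1 h2 ⊢
    rcases h2 with ⟨hc, hb1, hb2⟩ | h2 | ⟨hb, hc, h2⟩
    · have := inSub_bounds (T := node l r) (by simp only [inSub]; exact h1)
      simp [size] at this
      left; exact ⟨hc, by omega⟩
    · -- b in left subtree
      have hbl := inSub_bounds h2
      rcases h1 with ⟨hb', _, _⟩ | h1 | ⟨ha', hb', _⟩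
      · omega
      · right; left; exact ihl h1 h2
      · omega
    · -- b,c in right subtree
      have hbr := inSub_bounds h2
      rcases h1 with ⟨hb', _, _⟩ | h1 | ⟨ha', hb'', h1⟩
      · omega
      · have := inSub_bounds h1; omega
      · right; right; exact ⟨ha', hc, ihr h1 h2⟩

lemma inSub_antisymm {T : BinTree} {a b : ℕ} (h1 : inSub T a b) (h2 : inSub T b a) :
    a = b := by
  induction T generalizing a b with
  | leaf => exact absurd h1 (by simp [inSub])
  | node l r ihl ihr =>
    simp only [inSub] at h1 h2
    rcases h1 with ⟨hb, _, _⟩ | h1 | ⟨ha', hb', h1⟩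
    · rcases h2 with ⟨ha, _, _⟩ | h2 | ⟨h2a, h2b, h2⟩
      · omega
      · have := inSub_bounds h2; omega
      · omega
    · rcases h2 with ⟨ha, _, _⟩ | h2 | ⟨h2a, h2b, h2⟩
      · have := inSub_bounds h1; omega
      · exact ihl h1 h2
      · have := inSub_bounds h1; omega
    · rcases h2 with ⟨ha, _, _⟩ | h2 | ⟨h2a, h2b, h2⟩
      · omega
      · have := inSub_bounds h2; omega
      · have := ihr h1 h2; omega

/-- Convexity of subtrees: if `x` is in the subtree of `z` and `x < y < z` then
`y` is in the subtree of `z`. -/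
lemma inSub_between {T : BinTree} {x y z : ℕ} (h : inSub T x z) (h1 : x < y) (h2 : y < z) :
    inSub T y z := by
  induction T generalizing x y z with
  | leaf => exact absurd h (by simp [inSub])
  | node l r ihl ihr =>
    simp only [inSub] at h ⊢
    rcases h with ⟨hz, hx1, hx2⟩ | h | ⟨hx', hz', h⟩
    · left; exact ⟨hz, by omega⟩
    · have := inSub_bounds h
      right; left; exact ihl h h1 h2
    · right; right
      refine ⟨by omega, hz', ihr h (by omega) (by omega)⟩

lemma rv_out {T : BinTree} {b : ℕ} (h : b = 0 ∨ T.size < b) : rv T b = 0 := by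
  induction T generalizing b with
  | leaf => simp [rv]
  | node l r ihl ihr =>
    simp only [rv, size] at *
    rcases h with h | h
    · subst h; simp [ihl (Or.inl rfl)]
    · rw [if_neg (by omega), if_neg (by omega)]
      exact ihr (Or.inr (by omega))

lemma rv_valid {T : BinTree} {b : ℕ} (h1 : 1 ≤ b) (h2 : b ≤ T.size) :
    b + rv T b ≤ T.size := by
  induction T generalizing b with
  | leaf => simp [size] at h2; omega
  | node l r ihl ihr =>
    simp only [rv, size] at *
    split
    · have := ihl h1 (by omega); omega
    · split
      · omega
      · have := ihr (b := b - (l.size + 1)) (by omega) (by omega); omega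

/-- Characterization of "strictly greater element in subtree" via `rv`. -/
lemma inSub_gt_iff (T : BinTree) {a b : ℕ} (h : b < a) :
    inSub T a b ↔ 1 ≤ b ∧ a ≤ b + rv T b := by
  induction T generalizing a b with
  | leaf => simp [inSub, rv]; omega
  | node l r ihl ihr =>
    simp only [inSub, rv]
    rcases lt_trichotomy b (l.size + 1) with hb | hb | hb
    · rw [if_pos hb]
      constructor
      · rintro (⟨h1, _, _⟩ | h1 | ⟨_, h1, _⟩)
        · omega
        · exact (ihl h).mp h1
        · omega
      · intro h1
        right; left; exact (ihl h).mpr h1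
    · rw [if_neg (by omega), if_pos hb]
      constructor
      · rintro (⟨h1, h2, h3⟩ | h1 | ⟨_, h1, _⟩)
        · omega
        · have := inSub_bounds h1; omega
        · omega
      · intro h1
        left; exact ⟨hb, by omega, by omega⟩
    · rw [if_neg (by omega), if_neg (by omega)]
      constructor
      · rintro (⟨h1, h2, h3⟩ | h1 | ⟨_, h1, h2⟩)
        · omega
        · have := inSub_bounds h1; omega
        · have := (ihr (a := a - (l.size + 1)) (b := b - (l.size + 1)) (by omega)).mp h2
          omega
      · intro h1
        right; right
        refine ⟨by omega, hb, ?_⟩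
        exact (ihr (by omega)).mpr ⟨by omega, by omega⟩

end BinTree
namespace BinTree

/-- Block lemma: membership in subtree of a node of the left block. -/
lemma inSub_node_left {l r : BinTree} {a b : ℕ} (hb : b ≤ l.size) :
    inSub (node l r) a b ↔ inSub l a b := by
  simp only [inSub]
  constructor
  · rintro (⟨h1, _, _⟩ | h1 | ⟨_, h1, _⟩)
    · omega
    · exact h1
    · omega
  · intro h1; right; left; exact h1

lemma inSub_node_root {l r : BinTree} {a : ℕ} :
    inSub (node l r) a (l.size + 1) ↔ 1 ≤ a ∧ a ≤ l.size + r.size + 1 := by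
  have h : inSub (node l r) a (l.size + 1) ↔
      ((l.size + 1 = l.size + 1 ∧ 1 ≤ a ∧ a ≤ l.size + r.size + 1) ∨ inSub l a (l.size + 1) ∨
        (l.size + 1 < a ∧ l.size + 1 < l.size + 1 ∧
          inSub r (a - (l.size + 1)) (l.size + 1 - (l.size + 1)))) := Iff.rfl
  rw [h]
  constructor
  · rintro (⟨_, h1⟩ | h1 | ⟨_, h1, _⟩)
    · exact h1
    · have := inSub_bounds h1; omega
    · omega
  · intro h1; exact Or.inl ⟨rfl, h1⟩

lemma inSub_node_right {l r : BinTree} {a b : ℕ} (hb : l.size + 2 ≤ b) :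
    inSub (node l r) a b ↔ l.size + 1 < a ∧ inSub r (a - (l.size + 1)) (b - (l.size + 1)) := by
  simp only [inSub]
  constructor
  · rintro (⟨h1, _, _⟩ | h1 | ⟨h1, h2, h3⟩)
    · omega
    · have := inSub_bounds h1; omega
    · exact ⟨h1, h3⟩
  · rintro ⟨h1, h2⟩; right; right; exact ⟨h1, by omega, h2⟩

lemma rot_rv_mono {U V : BinTree} (h : Rot U V) : ∀ b, rv U b ≤ rv V b := by
  induction h with
  | root A B C =>
    intro b
    simp only [rv]
    split_ifs <;> simp only [size] at * <;> first | rfl | omega | (apply le_of_eq; congr 1; omega)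
  | left R h ih =>
    intro b
    have hs := rot_size h
    simp only [rv]
    split_ifs <;> first | rfl | exact ih _ | omega | (apply le_of_eq; congr 1; omega)
  | right L h ih =>
    intro b
    have hs := rot_size h
    simp only [rv]
    split_ifs <;> first | rfl | exact ih _ | omega | (apply le_of_eq; congr 1; omega)

lemma tamari_rv_mono {U V : BinTree} (h : TamariLE U V) (b : ℕ) : rv U b ≤ rv V b := by
  induction h with
  | refl => rfl
  | tail _ h ih => exact le_trans ih (rot_rv_mono h b)

/-- Validity of an attachment number `r` with respect to a tree `t2`. -/
def Valid (r : ℕ) (t2 : BinTree) : Prop := ∀ j, 1 ≤ j → j ≤ r → j + rv t2 j ≤ r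

/-- Grafting construction. -/
def graft : BinTree → ℕ → BinTree → BinTree
  | t1, _, leaf => node t1 leaf
  | t1, r, node A B => if r = A.size + B.size + 1 then node t1 (node A B)
      else node (graft t1 r A) B

lemma graft_size (t1 : BinTree) (r : ℕ) (t2 : BinTree) :
    (graft t1 r t2).size = t1.size + t2.size + 1 := by
  induction t2 generalizing t1 r with
  | leaf => simp [graft, size]
  | node A B ihA ihB =>
    rw [graft]
    split
    · simp [size]
    · simp [size, ihA]; omega

lemma valid_left {r : ℕ} {A B : BinTree} (h : Valid r (node A B)) (hr : r ≤ A.size) :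
    Valid r A := by
  intro j h1 h2
  have := h j h1 h2
  simp only [rv] at this
  rwa [if_pos (by omega)] at this

lemma valid_r_le {r : ℕ} {A B : BinTree} (h : Valid r (node A B))
    (hr : r ≤ A.size + B.size + 1) (hne : r ≠ A.size + B.size + 1) : r ≤ A.size := by
  by_contra hc
  have := h (A.size + 1) (by omega) (by omega)
  simp [rv] at this
  omega

lemma rv_graft {t1 : BinTree} {r : ℕ} {t2 : BinTree} (hv : Valid r t2) (hr : r ≤ t2.size)
    (b : ℕ) :
    rv (graft t1 r t2) b =
      if b < t1.size + 1 then rv t1 b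
      else if b = t1.size + 1 then r
      else rv t2 (b - (t1.size + 1)) := by
  induction t2 generalizing t1 r b with
  | leaf =>
    simp [size] at hr
    subst hr
    simp only [graft, rv, size]
  | node A B ihA ihB =>
    rw [graft]
    split
    · rename_i he
      subst he
      simp only [rv, size]
      try split_ifs <;> first | rfl | omega | (congr 1; omega)
    · rename_i hne
      have hrA : r ≤ A.size := valid_r_le hv (by simpa [size] using hr) (by simpa [size] using hne)
      have hvA : Valid r A := valid_left hv hrA
      simp only [rv, graft_size, ihA hvA hrA]
      split_ifs <;> first | rfl | omega | (congr 1; omega)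

/-- Congruence of the Tamari order under grafting on a node. -/
lemma tamari_node {L L' R R' : BinTree} (hL : TamariLE L L') (hR : TamariLE R R') :
    TamariLE (node L R) (node L' R') := by
  have h1 : TamariLE (node L R) (node L' R) :=
    Relation.ReflTransGen.lift (fun X => node X R) (fun a b h => Rot.left R h) _ _ hL
  have h2 : TamariLE (node L' R) (node L' R') :=
    Relation.ReflTransGen.lift (fun X => node L' X) (fun a b h => Rot.right L' h) _ _ hR
  exact h1.trans h2

lemma graft_tamari {t1 : BinTree} {r : ℕ} {t2 : BinTree} (hv : Valid r t2) (hr : r ≤ t2.size) :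
    TamariLE (graft t1 r t2) (node t1 t2) := by
  induction t2 generalizing t1 r with
  | leaf =>
    simp [size] at hr; subst hr
    exact Relation.ReflTransGen.refl
  | node A B ihA ihB =>
    rw [graft]
    split
    · exact Relation.ReflTransGen.refl
    · rename_i hne
      have hrA : r ≤ A.size := valid_r_le hv (by simpa [size] using hr) (by simpa [size] using hne)
      have hvA : Valid r A := valid_left hv hrA
      have h1 : TamariLE (node (graft t1 r A) B) (node (node t1 A) B) :=
        tamari_node (ihA hvA hrA) Relation.ReflTransGen.refl
      exact h1.tail (Rot.root t1 A B)

end BinTree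
namespace BinTree

lemma rv_left {l r : BinTree} {b : ℕ} (h : b ≤ l.size) : rv (node l r) b = rv l b := by
  simp only [rv]; rw [if_pos (by omega)]

lemma rv_root {l r : BinTree} : rv (node l r) (l.size + 1) = r.size := by
  simp [rv]

lemma rv_right {l r : BinTree} {b : ℕ} (h : l.size + 1 < b) :
    rv (node l r) b = rv r (b - (l.size + 1)) := by
  simp only [rv]; rw [if_neg (by omega), if_neg (by omega)]

lemma graft_full (t1 t2 : BinTree) : graft t1 t2.size t2 = node t1 t2 := by
  cases t2 with
  | leaf => rfl
  | node A B => rw [graft, if_pos (by simp [size])]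

lemma valid_full (t2 : BinTree) : Valid t2.size t2 := fun _ h1 h2 => rv_valid h1 h2

lemma rot_not_leaf {U : BinTree} (h : Rot U leaf) : False := by cases h

lemma rot_inv {U P Q : BinTree} (h : Rot U (node P Q)) :
    (∃ B C, Q = node B C ∧ U = node (node P B) C) ∨
    (∃ L, U = node L Q ∧ Rot L P) ∨
    (∃ R, U = node P R ∧ Rot R Q) := by
  cases h with
  | root A B C => exact Or.inl ⟨B, C, rfl, rfl⟩
  | left R h => exact Or.inr (Or.inl ⟨_, rfl, h⟩)
  | right L h => exact Or.inr (Or.inr ⟨_, rfl, h⟩)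

lemma ungraft {t2 : BinTree} : ∀ {t1 : BinTree} {r : ℕ} {U : BinTree}, Valid r t2 →
    r ≤ t2.size → Rot U (graft t1 r t2) →
    ∃ t1' r' t2', U = graft t1' r' t2' ∧ TamariLE t1' t1 ∧ TamariLE t2' t2 ∧
      r' ≤ t2'.size ∧ Valid r' t2' := by
  induction t2 with
  | leaf =>
    intro t1 r U hv hr h
    have hg : graft t1 r leaf = node t1 leaf := rfl
    rw [hg] at h
    rcases rot_inv h with ⟨B, C, hQ, hU⟩ | ⟨L, hU, hL⟩ | ⟨R, hU, hR⟩
    · simp at hQ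
    · exact ⟨L, 0, leaf, by simpa [graft] using hU, Relation.ReflTransGen.single hL,
        Relation.ReflTransGen.refl, by simp [size], fun j h1 h2 => by omega⟩
    · exact absurd hR rot_not_leaf
  | node A B ihA ihB =>
    intro t1 r U hv hr h
    by_cases hre : r = (node A B).size
    · subst hre
      rw [graft_full] at h
      rcases rot_inv h with ⟨B0, C0, hQ, hU⟩ | ⟨L, hU, hL⟩ | ⟨R, hU, hR⟩
      · cases hQ
        refine ⟨t1, A.size, node A B, ?_, Relation.ReflTransGen.refl,
          Relation.ReflTransGen.refl, by simp only [size]; omega, ?_⟩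
        · rw [hU, graft, if_neg (by omega), graft_full]
        · intro j h1 h2
          rw [rv_left (by omega)]
          have := rv_valid (T := A) h1 h2
          omega
      · exact ⟨L, (node A B).size, node A B, by rw [graft_full]; exact hU,
          Relation.ReflTransGen.single hL, Relation.ReflTransGen.refl, le_refl _,
          valid_full _⟩
      · exact ⟨t1, R.size, R, by rw [graft_full]; exact hU, Relation.ReflTransGen.refl,
          Relation.ReflTransGen.single hR, le_refl _, valid_full _⟩
    · have hr' : r ≤ A.size + B.size + 1 := by simpa [size] using hr
      have hrA : r ≤ A.size := valid_r_le hv hr' (by simpa [size] using hre)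
      have hvA : Valid r A := valid_left hv hrA
      have hg : graft t1 r (node A B) = node (graft t1 r A) B := by
        rw [graft, if_neg (by simpa [size] using hre)]
      rw [hg] at h
      rcases rot_inv h with ⟨B0, C0, hQ, hU⟩ | ⟨L, hU, hL⟩ | ⟨R, hU, hR⟩
      · subst hQ
        refine ⟨t1, r, node (node A B0) C0, ?_, Relation.ReflTransGen.refl,
          Relation.ReflTransGen.single (Rot.root A B0 C0), by simp [size]; omega, ?_⟩
        · rw [graft, if_neg (by simp only [size]; omega), graft, if_neg (by omega), hU]
        · intro j h1 h2
          have := hv j h1 h2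
          rw [rv_left (by simp [size]; omega), rv_left (by omega)]
          rwa [rv_left (by omega)] at this
      · obtain ⟨t1', r', A', hLeq, ht1, hA, hle, hval⟩ := ihA hvA hrA hL
        refine ⟨t1', r', node A' B, ?_, ht1, tamari_node hA Relation.ReflTransGen.refl,
          by simp [size]; omega, ?_⟩
        · rw [graft, if_neg (by omega), hU, hLeq]
        · intro j h1 h2
          have := hval j h1 h2
          rwa [rv_left (by omega)]
      · refine ⟨t1, r, node A R, ?_, Relation.ReflTransGen.refl,
          tamari_node Relation.ReflTransGen.refl (Relation.ReflTransGen.single hR),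
          by simp [size]; omega, ?_⟩
        · rw [graft, if_neg (by omega), hU]
        · intro j h1 h2
          have := hv j h1 h2
          rw [rv_left (by omega)]
          rwa [rv_left (by omega)] at this

lemma decomp {T1 T2 U : BinTree} (h : TamariLE U (node T1 T2)) :
    ∃ t1 r t2, U = graft t1 r t2 ∧ TamariLE t1 T1 ∧ TamariLE t2 T2 ∧ r ≤ t2.size ∧
      Valid r t2 := by
  induction h using Relation.ReflTransGen.head_induction_on with
  | refl => exact ⟨T1, T2.size, T2, (graft_full T1 T2).symm, Relation.ReflTransGen.refl,
      Relation.ReflTransGen.refl, le_refl _, valid_full _⟩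
  | head hrot _ ih =>
    obtain ⟨t1, r, t2, hU, h1, h2, hle, hval⟩ := ih
    rw [hU] at hrot
    obtain ⟨t1', r', t2', hU', h1', h2', hle', hval'⟩ := ungraft hval hle hrot
    exact ⟨t1', r', t2', hU', h1'.trans h1, h2'.trans h2, hle', hval'⟩

end BinTree
namespace BinTree

lemma decRel_iff {T : BinTree} {a b : ℕ} : decRel T a b ↔ b < a ∧ inSub T a b := by
  constructor
  · rintro ⟨h1, _, h2⟩; exact ⟨h1, h2⟩
  · rintro ⟨h1, h2⟩; exact ⟨h1, by omega, h2⟩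

lemma incRel_iff {T : BinTree} {a b : ℕ} : incRel T a b ↔ a < b ∧ inSub T a b := by
  constructor
  · rintro ⟨h1, _, h2⟩; exact ⟨h1, h2⟩
  · rintro ⟨h1, h2⟩; exact ⟨h1, by omega, h2⟩

lemma IPrel_iff {T' T : BinTree} {a b : ℕ} :
    IPrel T' T a b ↔ (b < a ∧ inSub T' a b) ∨ (a < b ∧ inSub T a b) := by
  unfold IPrel
  rw [decRel_iff, incRel_iff]

lemma ip_isIntervalPoset {T' T : BinTree} (hsz : T'.size = T.size)
    (hrv : ∀ b, rv T' b ≤ rv T b) : IsIntervalPoset T.size (IPrel T' T) := by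
  refine ⟨?_, ?_, ?_, ?_, ?_⟩
  · intro a b h
    rw [IPrel_iff] at h
    rcases h with ⟨_, h⟩ | ⟨_, h⟩
    · have := inSub_bounds h; omega
    · have := inSub_bounds h; omega
  · intro a h
    rw [IPrel_iff] at h
    rcases h with ⟨h, _⟩ | ⟨h, _⟩ <;> omega
  · intro a b c hab hbc
    rw [IPrel_iff] at hab hbc ⊢
    rcases hab with ⟨h1, h2⟩ | ⟨h1, h2⟩ <;> rcases hbc with ⟨h3, h4⟩ | ⟨h3, h4⟩
    · exact Or.inl ⟨by omega, inSub_trans h2 h4⟩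
    · -- dec a b, inc b c
      have hb1 : 1 ≤ b := (inSub_bounds h2).2.2.1
      have key : a ≤ b + rv T b :=
        le_trans ((inSub_gt_iff T' h1).mp h2).2 (by have := hrv b; omega)
      rcases lt_trichotomy a c with hac | hac | hac
      · exact Or.inr ⟨hac, inSub_between h4 h1 hac⟩
      · exfalso
        subst hac
        have : inSub T a b := (inSub_gt_iff T h1).mpr ⟨hb1, key⟩
        have := inSub_antisymm this h4
        omega
      · exfalso
        have : inSub T c b := (inSub_gt_iff T (by omega)).mpr ⟨hb1, by omega⟩
        have := inSub_antisymm this h4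
        omega
    · -- inc a b, dec b c
      have hc1 : 1 ≤ c := (inSub_bounds h4).2.2.1
      have hbkey : b ≤ c + rv T' c := ((inSub_gt_iff T' h3).mp h4).2
      rcases lt_trichotomy a c with hac | hac | hac
      · -- a < c : inc a c
        have : inSub T b c := (inSub_gt_iff T h3).mpr ⟨hc1, by have := hrv c; omega⟩
        exact Or.inr ⟨hac, inSub_trans h2 this⟩
      · exfalso
        subst hac
        have ha1 : 1 ≤ a := (inSub_bounds h2).1
        have : inSub T b a := (inSub_gt_iff T h3).mpr ⟨ha1, by have := hrv a; omega⟩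
        have := inSub_antisymm h2 this
        omega
      · -- c < a : dec a c
        exact Or.inl ⟨hac, (inSub_gt_iff T' hac).mpr ⟨hc1, by omega⟩⟩
    · exact Or.inr ⟨by omega, inSub_trans h2 h4⟩
  · intro a b c hab hbc h
    rw [IPrel_iff] at h ⊢
    rcases h with ⟨h1, _⟩ | ⟨h1, h2⟩
    · omega
    · exact Or.inr ⟨hbc, inSub_between h2 hab hbc⟩
  · intro a b c hab hbc h
    rw [IPrel_iff] at h ⊢
    rcases h with ⟨h1, h2⟩ | ⟨h1, _⟩
    · have ha1 : 1 ≤ a := (inSub_bounds h2).2.2.1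
      have := ((inSub_gt_iff T' h1).mp h2).2
      exact Or.inl ⟨hab, (inSub_gt_iff T' hab).mpr ⟨ha1, by omega⟩⟩
    · omega

end BinTree
namespace BinTree

lemma inSub_graft_left {t1 : BinTree} {r : ℕ} {t2 : BinTree} (hval : Valid r t2)
    (hr : r ≤ t2.size) {a b : ℕ} (hba : b < a) (hb : b ≤ t1.size) :
    inSub (graft t1 r t2) a b ↔ inSub t1 a b := by
  rw [inSub_gt_iff _ hba, inSub_gt_iff t1 hba, rv_graft hval hr, if_pos (by omega)]

lemma inSub_graft_root {t1 : BinTree} {r : ℕ} {t2 : BinTree} (hval : Valid r t2)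
    (hr : r ≤ t2.size) {a : ℕ} (hba : t1.size + 1 < a) :
    inSub (graft t1 r t2) a (t1.size + 1) ↔ a ≤ t1.size + 1 + r := by
  rw [inSub_gt_iff _ hba, rv_graft hval hr, if_neg (by omega), if_pos rfl]
  omega

lemma inSub_graft_right {t1 : BinTree} {r : ℕ} {t2 : BinTree} (hval : Valid r t2)
    (hr : r ≤ t2.size) {a b : ℕ} (hb : t1.size + 1 < b) (hba : b < a) :
    inSub (graft t1 r t2) a b ↔ inSub t2 (a - (t1.size + 1)) (b - (t1.size + 1)) := by
  rw [inSub_gt_iff _ hba, rv_graft hval hr, if_neg (by omega), if_neg (by omega),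
    inSub_gt_iff t2 (by omega)]
  omega

end BinTree

lemma isIntervalPoset_congr {n : ℕ} {R R' : ℕ → ℕ → Prop} (h : ∀ a b, R a b ↔ R' a b)
    (hR : IsIntervalPoset n R) : IsIntervalPoset n R' := by
  obtain ⟨h1, h2, h3, h4, h5⟩ := hR
  refine ⟨fun a b hab => h1 a b ((h a b).mpr hab), fun a ha => h2 a ((h a a).mpr ha),
    fun a b c hab hbc => (h a c).mp (h3 a b c ((h a b).mpr hab) ((h b c).mpr hbc)),
    fun a b c hab hbc hac => (h b c).mp (h4 a b c hab hbc ((h a c).mpr hac)),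
    fun a b c hab hbc hca => (h b a).mp (h5 a b c hab hbc ((h c a).mpr hca))⟩
/-- Let `T = x(T1,T2)` be a binary tree. The set of interval-posets
`{IP[T',T] : T' ≤ T}` equals the union over all binary trees `T1' ≤ T1` and `T2' ≤ T2` of
the compositions `𝔹(IP[T1',T1], IP[T2',T2])`. -/
theorem initialIntervals_eq_union_comp (T1 T2 : BinTree) (I : ℕ → ℕ → Prop) :
    (∃ T' : BinTree, T'.size = (BinTree.node T1 T2).size ∧ TamariLE T' (BinTree.node T1 T2) ∧
        ∀ a b, I a b ↔ IPrel T' (BinTree.node T1 T2) a b) ↔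
      (∃ T1' T2' : BinTree, T1'.size = T1.size ∧ TamariLE T1' T1 ∧
        T2'.size = T2.size ∧ TamariLE T2' T2 ∧
        I ∈ Comp T1.size T2.size (IPrel T1' T1) (IPrel T2' T2)) := by
  classical
  constructor
  · rintro ⟨T', hsz, hle, hI⟩
    obtain ⟨t1, r, t2, hU, h1, h2, hr, hval⟩ := decomp hle
    subst hU
    have hs1 : t1.size = T1.size := tamari_size h1
    have hs2 : t2.size = T2.size := tamari_size h2
    have hgs := graft_size t1 r t2
    refine ⟨t1, t2, hs1, h1, hs2, h2, ?_⟩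
    rw [← hs1, ← hs2]
    simp only [Comp, Set.mem_setOf_eq]
    refine ⟨?_, ?_, ?_, ?_, ?_⟩
    · -- interval poset
      have hip : IsIntervalPoset (T1.size + T2.size + 1) I :=
        isIntervalPoset_congr (fun a b => (hI a b).symm)
          (ip_isIntervalPoset (by simp only [size]; omega) (tamari_rv_mono hle))
      rw [hs1, hs2]
      exact hip
    · -- block 1
      intro a b ha1 ha2 hb1 hb2
      rw [hI, IPrel_iff, IPrel_iff]
      apply or_congr
      · exact and_congr_right fun hba => inSub_graft_left hval hr hba (by omega)
      · exact and_congr_right fun hab => inSub_node_left (by omega)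
    · -- block 2
      intro a b ha1 ha2 hb1 hb2
      rw [hI, IPrel_iff, IPrel_iff]
      constructor
      · rintro (⟨hba, h⟩ | ⟨hab, h⟩)
        · exact Or.inl ⟨by omega, ((inSub_graft_right hval hr (by omega) hba).mp h)⟩
        · rw [inSub_node_right (by omega)] at h
          refine Or.inr ⟨by omega, ?_⟩
          rw [hs1]
          exact h.2
      · rintro (⟨hba, h⟩ | ⟨hab, h⟩)
        · exact Or.inl ⟨by omega, (inSub_graft_right hval hr (by omega) (by omega)).mpr h⟩
        · refine Or.inr ⟨by omega, (inSub_node_right (by omega)).mpr ⟨by omega, ?_⟩⟩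
          rw [← hs1]
          exact h
    · -- relations to the root
      intro i hi1 hi2
      rw [hI, IPrel_iff]
      right
      refine ⟨by omega, ?_⟩
      rw [hs1]
      exact inSub_node_root.mpr ⟨hi1, by omega⟩
    · -- no relation from the root
      intro j hj
      rw [hI, IPrel_iff]
      rintro (⟨hj1, _⟩ | ⟨hj1, hj2⟩)
      · omega
      · rw [inSub_node_right (by omega)] at hj2
        omega
  · rintro ⟨t1, t2, hs1, h1, hs2, h2, hm⟩
    simp only [Comp, Set.mem_setOf_eq] at hm
    obtain ⟨hip, hc1, hc2, hc3, hc4⟩ := hm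
    obtain ⟨hbd, hirr, htr, hax4, hax5⟩ := hip
    -- basic exclusions
    have factA : ∀ b, b ≤ T1.size → ¬ I (T1.size + 1) b := by
      intro b hb hIb
      have hb1 : 1 ≤ b := (hbd _ _ hIb).2.2.1
      exact hirr _ (htr _ _ _ (hc3 b hb1 hb) hIb)
    have factB : ∀ a b, b ≤ T1.size → T1.size + 1 ≤ a → ¬ I a b := by
      intro a b hb ha hab
      rcases eq_or_lt_of_le ha with he | hlt
      · exact factA b hb (he ▸ hab)
      · have hb1 : 1 ≤ b := (hbd _ _ hab).2.2.1
        exact factA b hb (hax5 b (T1.size + 1) a (by omega) hlt hab)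
    have factC : ∀ a b, a ≤ T1.size + 1 → T1.size + 2 ≤ b → ¬ I a b := by
      intro a b ha hb hab
      rcases eq_or_lt_of_le ha with he | hlt
      · exact hc4 b (by omega) (by rwa [he] at hab)
      · exact hc4 b (by omega) (hax4 a (T1.size + 1) b (by omega) (by omega) hab)
    -- the set of elements related to the root from above
    set S : Finset ℕ :=
      (Finset.Icc (T1.size + 2) (T1.size + T2.size + 1)).filter (fun a => I a (T1.size + 1))
      with hSdef
    set r : ℕ := S.card with hrdef
    have hmemS : ∀ a, a ∈ S ↔ (T1.size + 2 ≤ a ∧ a ≤ T1.size + T2.size + 1 ∧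
        I a (T1.size + 1)) := by
      intro a
      simp [hSdef, Finset.mem_filter, Finset.mem_Icc, and_assoc]
    have hS : ∀ a, a ∈ S ↔ T1.size + 2 ≤ a ∧ a ≤ T1.size + 1 + r := by
      rcases Finset.eq_empty_or_nonempty S with he | hne
      · intro a
        rw [he]
        simp only [Finset.notMem_empty, false_iff]
        have : r = 0 := by rw [hrdef, he]; simp
        omega
      · intro a
        have hM := S.max'_mem hne
        rw [hmemS] at hM
        have hIcc : S = Finset.Icc (T1.size + 2) (S.max' hne) := by
          ext x
          rw [Finset.mem_Icc, hmemS]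
          constructor
          · intro hx
            refine ⟨hx.1, ?_⟩
            exact S.le_max' x (by rw [hmemS]; exact hx)
          · intro hx
            refine ⟨hx.1, by omega, ?_⟩
            rcases eq_or_lt_of_le hx.2 with he2 | hlt
            · rw [he2]; exact hM.2.2
            · exact hax5 (T1.size + 1) x (S.max' hne) (by omega) hlt hM.2.2
        have hcard : r = S.max' hne + 1 - (T1.size + 2) := by
          have hcc := congrArg Finset.card hIcc
          rw [Nat.card_Icc] at hcc
          rw [hrdef]
          exact hcc
        rw [hIcc, Finset.mem_Icc]
        omega
    have hrk2 : r ≤ T2.size := by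
      have hsub : S ⊆ Finset.Icc (T1.size + 2) (T1.size + T2.size + 1) :=
        Finset.filter_subset _ _
      have := Finset.card_le_card hsub
      rw [Nat.card_Icc] at this
      omega
    have hmemI : ∀ a, T1.size + 1 < a → (I a (T1.size + 1) ↔ a ≤ T1.size + 1 + r) := by
      intro a ha
      constructor
      · intro hIa
        have hbd2 := hbd _ _ hIa
        have : a ∈ S := (hmemS a).mpr ⟨by omega, by omega, hIa⟩
        rw [hS] at this
        omega
      · intro hle2
        have : a ∈ S := (hS a).mpr ⟨by omega, hle2⟩
        exact ((hmemS a).mp this).2.2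
    have hrt2 : r ≤ t2.size := by omega
    have hval : Valid r t2 := by
      intro j hj1 hj2
      by_contra hcon
      push_neg at hcon
      have hjs : j ≤ t2.size := by omega
      have hrvval := rv_valid (T := t2) hj1 hjs
      have hrvpos : 1 ≤ rv t2 j := by omega
      have hcS : I (T1.size + 1 + j) (T1.size + 1) :=
        (hmemI (T1.size + 1 + j) (by omega)).mpr (by omega)
      have hin : inSub t2 (j + rv t2 j) j :=
        (inSub_gt_iff t2 (by omega)).mpr ⟨hj1, le_refl _⟩
      have hdc : I (T1.size + 1 + (j + rv t2 j)) (T1.size + 1 + j) := by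
        rw [hc2 _ _ (by omega) (by omega) (by omega) (by omega)]
        rw [IPrel_iff]
        left
        refine ⟨by omega, ?_⟩
        have e1 : T1.size + 1 + (j + rv t2 j) - (T1.size + 1) = j + rv t2 j := by omega
        have e2 : T1.size + 1 + j - (T1.size + 1) = j := by omega
        rw [e1, e2]
        exact hin
      have := htr _ _ _ hdc hcS
      have := (hmemI (T1.size + 1 + (j + rv t2 j)) (by omega)).mp this
      omega
    refine ⟨graft t1 r t2, ?_, ?_, ?_⟩
    · rw [graft_size]
      simp only [size]
      omega
    · exact (graft_tamari hval hrt2).trans (tamari_node h1 h2)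
    · intro a b
      rw [IPrel_iff]
      by_cases hrange : 1 ≤ a ∧ a ≤ T1.size + T2.size + 1 ∧ 1 ≤ b ∧ b ≤ T1.size + T2.size + 1
      swap
      · constructor
        · intro h
          exact absurd (hbd a b h) hrange
        · rintro (⟨_, h⟩ | ⟨_, h⟩)
          · have := inSub_bounds h
            rw [graft_size] at this
            exact absurd (by omega) hrange
          · have := inSub_bounds h
            simp only [size] at this
            exact absurd (by omega) hrange
      obtain ⟨ha1, ha2, hb1, hb2⟩ := hrange
      rcases lt_trichotomy a b with hab | hab | hab
      · -- increasing part
        have hnd : ¬ (b < a) := by omega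
        rcases lt_trichotomy b (T1.size + 1) with hbk | hbk | hbk
        · -- both in block 1
          have hh := hc1 a b ha1 (by omega) hb1 (by omega)
          rw [hh, IPrel_iff]
          constructor
          · rintro (⟨h', _⟩ | ⟨_, h'⟩)
            · omega
            · exact Or.inr ⟨hab, (inSub_node_left (by omega)).mpr h'⟩
          · rintro (⟨h', _⟩ | ⟨_, h'⟩)
            · omega
            · exact Or.inr ⟨hab, (inSub_node_left (by omega)).mp h'⟩
        · -- b is the root
          subst hbk
          constructor
          · intro _
            exact Or.inr ⟨hab, inSub_node_root.mpr ⟨ha1, by omega⟩⟩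
          · intro _
            exact hc3 a ha1 (by omega)
        · -- b in block 2
          rcases lt_or_ge (T1.size + 1) a with hak | hak
          · -- both in block 2
            have hh := hc2 a b (by omega) (by omega) (by omega) (by omega)
            rw [hh, IPrel_iff]
            constructor
            · rintro (⟨h', _⟩ | ⟨_, h'⟩)
              · omega
              · exact Or.inr ⟨hab, (inSub_node_right (by omega)).mpr ⟨by omega, h'⟩⟩
            · rintro (⟨h', _⟩ | ⟨_, h'⟩)
              · omega
              · refine Or.inr ⟨by omega, ?_⟩
                exact ((inSub_node_right (by omega)).mp h').2
          · -- a at most the root, b in block 2 : no relation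
            constructor
            · intro h
              exact absurd h (factC a b hak (by omega))
            · rintro (⟨h', _⟩ | ⟨_, h'⟩)
              · omega
              · rw [inSub_node_right (by omega)] at h'
                omega
      · -- equal: both false
        subst hab
        constructor
        · intro h
          exact absurd h (hirr a)
        · rintro (⟨h', _⟩ | ⟨h', _⟩) <;> omega
      · -- decreasing part
        rcases lt_trichotomy b (T1.size + 1) with hbk | hbk | hbk
        · rcases lt_or_ge (T1.size) a with hak | hak
          · -- a beyond block 1 : no relation
            constructor
            · intro h
              exact absurd h (factB a b (by omega) (by omega))
            · rintro (⟨h', hin⟩ | ⟨h', _⟩)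
              · rw [inSub_graft_left hval hrt2 h' (by omega)] at hin
                have := inSub_bounds hin
                omega
              · omega
          · -- both in block 1
            have hh := hc1 a b (by omega) (by omega) hb1 (by omega)
            rw [hh, IPrel_iff]
            constructor
            · rintro (⟨h', hin⟩ | ⟨h', _⟩)
              · exact Or.inl ⟨hab, (inSub_graft_left hval hrt2 hab (by omega)).mpr hin⟩
              · omega
            · rintro (⟨h', hin⟩ | ⟨h', _⟩)
              · exact Or.inl ⟨hab, (inSub_graft_left hval hrt2 hab (by omega)).mp hin⟩
              · omega
        · -- b is the root
          subst hbk
          rw [hmemI a hab]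
          constructor
          · intro h
            refine Or.inl ⟨hab, ?_⟩
            have := inSub_graft_root (t1 := t1) hval hrt2 (a := a) (by omega)
            rw [hs1] at this
            exact this.mpr (by omega)
          · rintro (⟨h', hin⟩ | ⟨h', _⟩)
            · have := inSub_graft_root (t1 := t1) hval hrt2 (a := a) (by omega)
              rw [hs1] at this
              have := this.mp hin
              omega
            · omega
        · -- both in block 2
          have hh := hc2 a b (by omega) (by omega) (by omega) (by omega)
          rw [hh, IPrel_iff]
          have hgr := inSub_graft_right (t1 := t1) hval hrt2 (a := a) (b := b)
            (by omega) hab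
          rw [hs1] at hgr
          constructor
          · rintro (⟨h', hin⟩ | ⟨h', _⟩)
            · exact Or.inl ⟨hab, hgr.mpr hin⟩
            · omega
          · rintro (⟨h', hin⟩ | ⟨h', _⟩)
            · exact Or.inl ⟨by omega, hgr.mp hin⟩
            · omega
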